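/- arXiv:1606.06486 — 2 statements merged into one kernel-verified Lean document; each statement's English description precedes it below -/
import Mathlib

section
/- Let 𝔲 := {X ∈ Mat₂(ℍ) : Xᴴ η + η X = 0 and XΦ = ΦX}, where η = diag(-1,1). Then the six matrices (i/2)·Φ, (j/2)·Φ, (k/2)·Φ, (i/2)·𝟙₂, (j/2)·𝟙₂, (k/2)·𝟙₂ are linearly independent over ℝ and their real span equals 𝔲; in particular dim_ℝ 𝔲 = 6. -/
/- Statement 8: a basis for the Lie algebra 𝔲 = {X : Xᴴη + ηX = 0, XΦ = ΦX}. -/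

open Quaternion Matrix

noncomputable section

/-- The quaternions over ℝ. -/
abbrev Quat := Quaternion ℝ

/-- The imaginary units of the quaternions. -/
def qi : Quat := ⟨0, 1, 0, 0⟩
def qj : Quat := ⟨0, 0, 1, 0⟩
def qk : Quat := ⟨0, 0, 0, 1⟩

/-- The matrix η = diag(-1,1). -/
def eta2 : Matrix (Fin 2) (Fin 2) Quat := Matrix.diagonal ![-1, 1]

/-- The matrix Φ = [[0,-1],[1,0]]. -/
def Phi : Matrix (Fin 2) (Fin 2) Quat := !![0, -1; 1, 0]

/-- The Lie algebra 𝔲 ⊂ Mat₂(ℍ), as a set. -/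
def uSet : Set (Matrix (Fin 2) (Fin 2) Quat) :=
  {X | Xᴴ * eta2 + eta2 * X = 0 ∧ X * Phi = Phi * X}

/-- The six matrices i/2·Φ, j/2·Φ, k/2·Φ, i/2·𝟙, j/2·𝟙, k/2·𝟙. -/
def uBasis : Fin 6 → Matrix (Fin 2) (Fin 2) Quat :=
  ![((1/2 : ℝ) • qi) • Phi, ((1/2 : ℝ) • qj) • Phi, ((1/2 : ℝ) • qk) • Phi,
    ((1/2 : ℝ) • qi) • (1 : Matrix (Fin 2) (Fin 2) Quat),
    ((1/2 : ℝ) • qj) • (1 : Matrix (Fin 2) (Fin 2) Quat),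
    ((1/2 : ℝ) • qk) • (1 : Matrix (Fin 2) (Fin 2) Quat)]
lemma qi_re : qi.re = 0 := rfl
lemma qi_imI : qi.imI = 1 := rfl
lemma qi_imJ : qi.imJ = 0 := rfl
lemma qi_imK : qi.imK = 0 := rfl
lemma qj_re : qj.re = 0 := rfl
lemma qj_imI : qj.imI = 0 := rfl
lemma qj_imJ : qj.imJ = 1 := rfl
lemma qj_imK : qj.imK = 0 := rfl
lemma qk_re : qk.re = 0 := rfl
lemma qk_imI : qk.imI = 0 := rfl
lemma qk_imJ : qk.imJ = 0 := rfl
lemma qk_imK : qk.imK = 1 := rfl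

set_option maxHeartbeats 1000000 in
lemma sum_comb (c : Fin 6 → ℝ) :
    ∑ i, c i • uBasis i =
      !![⟨0, c 3/2, c 4/2, c 5/2⟩, ⟨0, -(c 0)/2, -(c 1)/2, -(c 2)/2⟩;
         ⟨0, c 0/2, c 1/2, c 2/2⟩, ⟨0, c 3/2, c 4/2, c 5/2⟩] := by
  have hb0 : uBasis 0 = ((1/2 : ℝ) • qi) • Phi := rfl
  have hb1 : uBasis 1 = ((1/2 : ℝ) • qj) • Phi := rfl
  have hb2 : uBasis 2 = ((1/2 : ℝ) • qk) • Phi := rfl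
  have hb3 : uBasis 3 = ((1/2 : ℝ) • qi) • (1 : Matrix (Fin 2) (Fin 2) Quat) := rfl
  have hb4 : uBasis 4 = ((1/2 : ℝ) • qj) • (1 : Matrix (Fin 2) (Fin 2) Quat) := rfl
  have hb5 : uBasis 5 = ((1/2 : ℝ) • qk) • (1 : Matrix (Fin 2) (Fin 2) Quat) := rfl
  rw [Fin.sum_univ_six, hb0, hb1, hb2, hb3, hb4, hb5]
  refine Matrix.ext fun i j => ?_
  fin_cases i <;> fin_cases j <;>
    · ext <;>
        simp [Phi, qi_re, qi_imI, qi_imJ, qi_imK, qj_re, qj_imI, qj_imJ, qj_imK, qk_re, qk_imI, qk_imJ, qk_imK, Matrix.add_apply, Matrix.smul_apply, Matrix.one_apply,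
          smul_eq_mul] <;> ring

lemma smul_phi_eq (q : Quat) : q • Phi = !![0, -q; q, 0] := by
  refine Matrix.ext fun i j => ?_
  fin_cases i <;> fin_cases j <;>
    simp only [Matrix.smul_apply, Phi, Matrix.cons_val_zero, Matrix.cons_val_one,
      Matrix.head_cons, Matrix.cons_val', Matrix.empty_val', Matrix.cons_val_fin_one,
      Matrix.head_fin_const, smul_eq_mul, mul_zero, mul_one, mul_neg] <;> simp

lemma smul_one_eq (q : Quat) : q • (1 : Matrix (Fin 2) (Fin 2) Quat) = !![q, 0; 0, q] := by
  refine Matrix.ext fun i j => ?_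
  fin_cases i <;> fin_cases j <;>
    simp only [Matrix.smul_apply, Matrix.one_apply, Matrix.cons_val_zero, Matrix.cons_val_one,
      Matrix.head_cons, Matrix.cons_val', Matrix.empty_val', Matrix.cons_val_fin_one,
      Matrix.head_fin_const, smul_eq_mul, mul_zero, mul_one, if_true, if_false] <;>
    simp

set_option maxHeartbeats 1000000 in
lemma phi_mem (q : Quat) (h : q.re = 0) : q • Phi ∈ uSet := by
  simp only [uSet, Set.mem_setOf_eq, smul_phi_eq]
  constructor <;>
    · refine Matrix.ext fun i j => ?_
      fin_cases i <;> fin_cases j <;>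
        · ext <;>
            simp [Phi, eta2, Matrix.mul_apply, Fin.sum_univ_two, Matrix.add_apply,
              Matrix.diagonal, Matrix.conjTranspose_apply, h]

set_option maxHeartbeats 1000000 in
lemma one_mem (q : Quat) (h : q.re = 0) : q • (1 : Matrix (Fin 2) (Fin 2) Quat) ∈ uSet := by
  simp only [uSet, Set.mem_setOf_eq, smul_one_eq]
  constructor <;>
    · refine Matrix.ext fun i j => ?_
      fin_cases i <;> fin_cases j <;>
        · ext <;>
            simp [Phi, eta2, Matrix.mul_apply, Fin.sum_univ_two, Matrix.add_apply,
              Matrix.diagonal, Matrix.conjTranspose_apply, h]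

lemma uBasis_mem (i : Fin 6) : uBasis i ∈ uSet := by
  have h1 : ((1/2 : ℝ) • qi : Quat).re = 0 := by simp [qi_re]
  have h2 : ((1/2 : ℝ) • qj : Quat).re = 0 := by simp [qj_re]
  have h3 : ((1/2 : ℝ) • qk : Quat).re = 0 := by simp [qk_re]
  fin_cases i
  · exact phi_mem _ h1
  · exact phi_mem _ h2
  · exact phi_mem _ h3
  · exact one_mem _ h1
  · exact one_mem _ h2
  · exact one_mem _ h3

set_option maxHeartbeats 1000000 in
lemma li : LinearIndependent ℝ uBasis := by
  rw [Fintype.linearIndependent_iff]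
  intro g hg
  rw [sum_comb, ← Matrix.ext_iff] at hg
  have h1 := hg 0 0
  have h2 := hg 1 0
  rw [Matrix.zero_apply, Quaternion.ext_iff] at h1 h2
  simp at h1 h2
  intro i
  fin_cases i <;> simp <;> linarith [h1.1, h1.2.1, h1.2.2, h2.1, h2.2.1, h2.2.2]

lemma sum_comb' (c0 c1 c2 c3 c4 c5 : ℝ) :
    ∑ i, (![c0,c1,c2,c3,c4,c5] i) • uBasis i =
      !![⟨0, c3/2, c4/2, c5/2⟩, ⟨0, -c0/2, -c1/2, -c2/2⟩;
         ⟨0, c0/2, c1/2, c2/2⟩, ⟨0, c3/2, c4/2, c5/2⟩] :=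
  sum_comb ![c0,c1,c2,c3,c4,c5]

set_option maxHeartbeats 1000000 in
lemma mem_span_of_mem (X : Matrix (Fin 2) (Fin 2) Quat) (hX : X ∈ uSet) :
    X ∈ Submodule.span ℝ (Set.range uBasis) := by
  obtain ⟨he, hf⟩ := hX
  rw [← Matrix.ext_iff] at he hf
  have e00 := he 0 0
  have e01 := he 0 1
  have f00 := hf 0 0
  have f01 := hf 0 1
  simp [Matrix.mul_apply, Fin.sum_univ_two, eta2, Phi, Matrix.add_apply,
    Matrix.conjTranspose_apply, Matrix.diagonal, Quaternion.ext_iff] at e00 e01 f00 f01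
  rw [Submodule.mem_span_range_iff_exists_fun]
  refine ⟨![-2*(X 0 1).imI, -2*(X 0 1).imJ, -2*(X 0 1).imK,
            2*(X 0 0).imI, 2*(X 0 0).imJ, 2*(X 0 0).imK], ?_⟩
  rw [sum_comb']
  refine Matrix.ext fun i j => ?_
  fin_cases i <;> fin_cases j <;>
    · ext <;> simp <;>
        linarith [e00, e01.1, e01.2.1, e01.2.2.1, e01.2.2.2,
          f00.1, f00.2.1, f00.2.2.1, f00.2.2.2, f01.1, f01.2.1, f01.2.2.1, f01.2.2.2]

theorem uBasis_is_basis_of_u :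
    LinearIndependent ℝ uBasis ∧
    (Submodule.span ℝ (Set.range uBasis) : Set (Matrix (Fin 2) (Fin 2) Quat)) = uSet ∧
    Module.finrank ℝ (Submodule.span ℝ (Set.range uBasis)) = 6 := by
  refine ⟨li, ?_, ?_⟩
  · apply Set.Subset.antisymm
    · intro X hX
      induction hX using Submodule.span_induction with
      | mem x hx => obtain ⟨i, rfl⟩ := hx; exact uBasis_mem i
      | zero => exact ⟨by simp, by simp⟩
      | add x y _ _ hx hy =>
          refine ⟨?_, by rw [Matrix.add_mul, Matrix.mul_add, hx.2, hy.2]⟩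
          rw [Matrix.conjTranspose_add, Matrix.add_mul, Matrix.mul_add,
            show xᴴ * eta2 + yᴴ * eta2 + (eta2 * x + eta2 * y)
              = (xᴴ * eta2 + eta2 * x) + (yᴴ * eta2 + eta2 * y) from by abel,
            hx.1, hy.1, add_zero]
      | smul r x _ hx =>
          refine ⟨?_, by rw [Matrix.smul_mul, Matrix.mul_smul, hx.2]⟩
          rw [show ((r • x)ᴴ : Matrix (Fin 2) (Fin 2) Quat) = r • xᴴ from
              Matrix.ext fun i j => by
                simp [Matrix.conjTranspose_apply, Matrix.smul_apply, Quaternion.ext_iff],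
            Matrix.smul_mul, Matrix.mul_smul, ← smul_add, hx.1, smul_zero]
    · intro X hX
      exact mem_span_of_mem X hX
  · rw [finrank_span_eq_card li]; rfl
end
end

section
/- Let B : (ℝ³ ⊗ ℝ⁴) × (ℝ³ ⊗ ℝ⁴) → ℝ³ ⊗ ℝ⁵ be an ℝ-bilinear alternating map that is 𝔰𝔬(1,2)-equivariant, i.e. B((Xx) ⊗ v, y ⊗ w) + B(x ⊗ v, (Xy) ⊗ w) = (X ⊗ id_{ℝ⁵})(B(x ⊗ v, y ⊗ w)) for all X ∈ 𝔰𝔬(1,2), x, y ∈ ℝ³, v, w ∈ ℝ⁴. Then there exists a unique symmetric bilinear map β : ℝ⁴ × ℝ⁴ → ℝ⁵ such that B(x ⊗ v, y ⊗ w) = K(x, y) ⊗ β(v, w) for all x, y ∈ ℝ³ and v, w ∈ ℝ⁴. -/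
/- Statement 14: 𝔰𝔬(1,2)-equivariant alternating bilinear maps
(ℝ³⊗ℝ⁴) × (ℝ³⊗ℝ⁴) → ℝ³⊗ℝ⁵ are of the form K(x,y) ⊗ β(v,w) with β symmetric. -/

open Matrix TensorProduct

noncomputable section

/-- The real matrix η₃ = diag(-1,1,1). -/
def eta3 : Matrix (Fin 3) (Fin 3) ℝ := Matrix.diagonal ![-1, 1, 1]

/-- The Lie algebra 𝔰𝔬(1,2) = {X : Xᵀ η₃ + η₃ X = 0}, as a set. -/
def so12Set : Set (Matrix (Fin 3) (Fin 3) ℝ) :=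
  {X | Xᵀ * eta3 + eta3 * X = 0}

/-- The Minkowski cross product K on ℝ^{1,2}, characterized by ⟨K(x,y),z⟩ = det(x|y|z). -/
def K (x y : Fin 3 → ℝ) : Fin 3 → ℝ :=
  ![-(x 1 * y 2 - x 2 * y 1), x 2 * y 0 - x 0 * y 2, x 0 * y 1 - x 1 * y 0]

/-- ℝ³ ⊗ ℝ⁴ as a real vector space. -/
abbrev T34 := TensorProduct ℝ (Fin 3 → ℝ) (Fin 4 → ℝ)

/-- ℝ³ ⊗ ℝ⁵ as a real vector space. -/
abbrev T35 := TensorProduct ℝ (Fin 3 → ℝ) (Fin 5 → ℝ)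

abbrev E3 : Fin 3 → (Fin 3 → ℝ) := fun i => Pi.single i 1

def pi3 (k : Fin 3) : T35 →ₗ[ℝ] (Fin 5 → ℝ) :=
  TensorProduct.lift ((LinearMap.lsmul ℝ (Fin 5 → ℝ)).comp (LinearMap.proj k))

lemma pi3_tmul (x : Fin 3 → ℝ) (q : Fin 5 → ℝ) (k : Fin 3) : pi3 k (x ⊗ₜ q) = x k • q := rfl

lemma expand_tmul {N : Type*} [AddCommGroup N] [Module ℝ N] (z : Fin 3 → ℝ) (q : N) :
    z ⊗ₜ[ℝ] q = ∑ k, z k • (E3 k ⊗ₜ[ℝ] q) := by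
  have hz : z = ∑ k, z k • E3 k := by
    funext j; simp [Finset.sum_apply, Pi.single_apply]
  conv_lhs => rw [hz]
  rw [sum_tmul]
  simp [smul_tmul']

lemma recon (t : T35) : t = ∑ k, E3 k ⊗ₜ[ℝ] pi3 k t := by
  induction t using TensorProduct.induction_on with
  | zero => simp only [LinearMap.map_zero, tmul_zero, Finset.sum_const_zero]
  | tmul x q =>
    conv_lhs => rw [expand_tmul x q]
    simp [pi3_tmul, tmul_smul]
  | add a b ha hb =>
    conv_lhs => rw [ha, hb]
    simp only [LinearMap.map_add, tmul_add, Finset.sum_add_distrib]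

lemma pi3_map (X : Matrix (Fin 3) (Fin 3) ℝ) (l : Fin 3) (t : T35) :
    pi3 l (TensorProduct.map X.mulVecLin LinearMap.id t) = ∑ a, X l a • pi3 a t := by
  induction t using TensorProduct.induction_on with
  | zero => simp only [LinearMap.map_zero, smul_zero, Finset.sum_const_zero]
  | tmul x q => simp [pi3_tmul, Matrix.mulVec, dotProduct, Finset.sum_smul, smul_smul]
  | add a b ha hb => simp only [LinearMap.map_add, ha, hb, smul_add, Finset.sum_add_distrib]

def gL1 : Matrix (Fin 3) (Fin 3) ℝ := !![0,1,0;1,0,0;0,0,0]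
def gL2 : Matrix (Fin 3) (Fin 3) ℝ := !![0,0,1;0,0,0;1,0,0]
def gR : Matrix (Fin 3) (Fin 3) ℝ := !![0,0,0;0,0,-1;0,1,0]
lemma hgL1 : gL1 ∈ so12Set := by
  show _ = _; ext i j
  fin_cases i <;> fin_cases j <;> simp [gL1, eta3, Matrix.mul_apply, Fin.sum_univ_three, Matrix.transpose_apply, Matrix.diagonal, Matrix.vecHead, Matrix.vecTail]
lemma hgL2 : gL2 ∈ so12Set := by
  show _ = _; ext i j
  fin_cases i <;> fin_cases j <;> simp [gL2, eta3, Matrix.mul_apply, Fin.sum_univ_three, Matrix.transpose_apply, Matrix.diagonal, Matrix.vecHead, Matrix.vecTail]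
lemma hgR : gR ∈ so12Set := by
  show _ = _; ext i j
  fin_cases i <;> fin_cases j <;> simp [gR, eta3, Matrix.mul_apply, Fin.sum_univ_three, Matrix.transpose_apply, Matrix.diagonal, Matrix.vecHead, Matrix.vecTail]
lemma mv_gL1_0 : gL1.mulVec (E3 0) = E3 1 := by
  funext j; fin_cases j <;> simp [gL1, Matrix.mulVec, dotProduct, Fin.sum_univ_three, Pi.single_apply]
lemma mv_gL1_1 : gL1.mulVec (E3 1) = E3 0 := by
  funext j; fin_cases j <;> simp [gL1, Matrix.mulVec, dotProduct, Fin.sum_univ_three, Pi.single_apply]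
lemma mv_gL1_2 : gL1.mulVec (E3 2) = (0 : Fin 3 → ℝ) := by
  funext j; fin_cases j <;> simp [gL1, Matrix.mulVec, dotProduct, Fin.sum_univ_three, Pi.single_apply]
lemma mv_gL2_0 : gL2.mulVec (E3 0) = E3 2 := by
  funext j; fin_cases j <;> simp [gL2, Matrix.mulVec, dotProduct, Fin.sum_univ_three, Pi.single_apply]
lemma mv_gL2_1 : gL2.mulVec (E3 1) = (0 : Fin 3 → ℝ) := by
  funext j; fin_cases j <;> simp [gL2, Matrix.mulVec, dotProduct, Fin.sum_univ_three, Pi.single_apply]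
lemma mv_gL2_2 : gL2.mulVec (E3 2) = E3 0 := by
  funext j; fin_cases j <;> simp [gL2, Matrix.mulVec, dotProduct, Fin.sum_univ_three, Pi.single_apply]
lemma mv_gR_0 : gR.mulVec (E3 0) = (0 : Fin 3 → ℝ) := by
  funext j; fin_cases j <;> simp [gR, Matrix.mulVec, dotProduct, Fin.sum_univ_three, Pi.single_apply]
lemma mv_gR_1 : gR.mulVec (E3 1) = E3 2 := by
  funext j; fin_cases j <;> simp [gR, Matrix.mulVec, dotProduct, Fin.sum_univ_three, Pi.single_apply]
lemma mv_gR_2 : gR.mulVec (E3 2) = -E3 1 := by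
  funext j; fin_cases j <;> simp [gR, Matrix.mulVec, dotProduct, Fin.sum_univ_three, Pi.single_apply]


set_option maxHeartbeats 2000000 in
set_option synthInstance.maxHeartbeats 200000 in
theorem equivariant_alternating_bilinear_form_of_cross_product
    (B : T34 →ₗ[ℝ] T34 →ₗ[ℝ] T35)
    (halt : ∀ u : T34, B u u = 0)
    (hequiv : ∀ X ∈ so12Set, ∀ (x y : Fin 3 → ℝ) (v w : Fin 4 → ℝ),
      B ((X.mulVec x) ⊗ₜ[ℝ] v) (y ⊗ₜ[ℝ] w) + B (x ⊗ₜ[ℝ] v) ((X.mulVec y) ⊗ₜ[ℝ] w) =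
        TensorProduct.map X.mulVecLin LinearMap.id (B (x ⊗ₜ[ℝ] v) (y ⊗ₜ[ℝ] w))) :
    ∃! β : (Fin 4 → ℝ) →ₗ[ℝ] (Fin 4 → ℝ) →ₗ[ℝ] (Fin 5 → ℝ),
      (∀ v w : Fin 4 → ℝ, β v w = β w v) ∧
      ∀ (x y : Fin 3 → ℝ) (v w : Fin 4 → ℝ),
        B (x ⊗ₜ[ℝ] v) (y ⊗ₜ[ℝ] w) = K x y ⊗ₜ[ℝ] β v w := by
  have key : ∀ X ∈ so12Set, ∀ (i j l : Fin 3) (v w : Fin 4 → ℝ),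
      pi3 l (B ((X.mulVec (E3 i)) ⊗ₜ[ℝ] v) (E3 j ⊗ₜ[ℝ] w)) +
        pi3 l (B (E3 i ⊗ₜ[ℝ] v) ((X.mulVec (E3 j)) ⊗ₜ[ℝ] w)) =
          ∑ a, X l a • pi3 a (B (E3 i ⊗ₜ[ℝ] v) (E3 j ⊗ₜ[ℝ] w)) := by
    intro X hX i j l v w
    have h := congrArg (pi3 l) (hequiv X hX (E3 i) (E3 j) v w)
    rw [map_add, pi3_map] at h
    exact h
  have hBneg : ∀ u u' : T34, B u u' = - B u' u := by
    intro u u'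
    have h := halt (u + u')
    simp only [map_add, LinearMap.add_apply, halt u, halt u', zero_add, add_zero] at h
    first
    | linear_combination (norm := module) h
    | linear_combination (norm := module) -h
  have hanti : ∀ (i j k : Fin 3) (v w : Fin 4 → ℝ),
      pi3 k (B (E3 i ⊗ₜ[ℝ] v) (E3 j ⊗ₜ[ℝ] w)) =
        - pi3 k (B (E3 j ⊗ₜ[ℝ] w) (E3 i ⊗ₜ[ℝ] v)) := by
    intro i j k v w
    rw [hBneg]
    exact map_neg _ _
  have e1 : ∀ v w : Fin 4 → ℝ, pi3 2 (B (E3 0 ⊗ₜ[ℝ] v) (E3 0 ⊗ₜ[ℝ] w)) = 0 := by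
    intro v w
    have h := key gR hgR 0 0 1 v w
    rw [mv_gR_0] at h
    simp [-map_zero, -map_eq_zero, zero_tmul, neg_tmul, LinearMap.map_zero, LinearMap.zero_apply,
      LinearMap.map_neg, Fin.sum_univ_three, gR] at h
    first
    | linear_combination (norm := module) h
    | linear_combination (norm := module) -h
  have e2 : ∀ v w : Fin 4 → ℝ, pi3 1 (B (E3 0 ⊗ₜ[ℝ] v) (E3 0 ⊗ₜ[ℝ] w)) = 0 := by
    intro v w
    have h := key gR hgR 0 0 2 v w
    rw [mv_gR_0] at h
    simp [-map_zero, -map_eq_zero, zero_tmul, neg_tmul, LinearMap.map_zero, LinearMap.zero_apply,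
      LinearMap.map_neg, Fin.sum_univ_three, gR] at h
    first
    | linear_combination (norm := module) h
    | linear_combination (norm := module) -h
  have e3 : ∀ v w : Fin 4 → ℝ, pi3 2 (B (E3 1 ⊗ₜ[ℝ] v) (E3 1 ⊗ₜ[ℝ] w)) = 0 := by
    intro v w
    have h := key gL2 hgL2 1 1 0 v w
    rw [mv_gL2_1] at h
    simp [-map_zero, -map_eq_zero, zero_tmul, neg_tmul, LinearMap.map_zero, LinearMap.zero_apply,
      LinearMap.map_neg, Fin.sum_univ_three, gL2] at h
    first
    | linear_combination (norm := module) h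
    | linear_combination (norm := module) -h
  have e4 : ∀ v w : Fin 4 → ℝ, pi3 0 (B (E3 1 ⊗ₜ[ℝ] v) (E3 1 ⊗ₜ[ℝ] w)) = 0 := by
    intro v w
    have h := key gL2 hgL2 1 1 2 v w
    rw [mv_gL2_1] at h
    simp [-map_zero, -map_eq_zero, zero_tmul, neg_tmul, LinearMap.map_zero, LinearMap.zero_apply,
      LinearMap.map_neg, Fin.sum_univ_three, gL2] at h
    first
    | linear_combination (norm := module) h
    | linear_combination (norm := module) -h
  have e5 : ∀ v w : Fin 4 → ℝ, pi3 1 (B (E3 2 ⊗ₜ[ℝ] v) (E3 2 ⊗ₜ[ℝ] w)) = 0 := by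
    intro v w
    have h := key gL1 hgL1 2 2 0 v w
    rw [mv_gL1_2] at h
    simp [-map_zero, -map_eq_zero, zero_tmul, neg_tmul, LinearMap.map_zero, LinearMap.zero_apply,
      LinearMap.map_neg, Fin.sum_univ_three, gL1] at h
    first
    | linear_combination (norm := module) h
    | linear_combination (norm := module) -h
  have e6 : ∀ v w : Fin 4 → ℝ, pi3 0 (B (E3 2 ⊗ₜ[ℝ] v) (E3 2 ⊗ₜ[ℝ] w)) = 0 := by
    intro v w
    have h := key gL1 hgL1 2 2 1 v w
    rw [mv_gL1_2] at h
    simp [-map_zero, -map_eq_zero, zero_tmul, neg_tmul, LinearMap.map_zero, LinearMap.zero_apply,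
      LinearMap.map_neg, Fin.sum_univ_three, gL1] at h
    first
    | linear_combination (norm := module) h
    | linear_combination (norm := module) -h
  have e7 : ∀ v w : Fin 4 → ℝ, pi3 2 (B (E3 1 ⊗ₜ[ℝ] v) (E3 2 ⊗ₜ[ℝ] w)) = 0 := by
    intro v w
    have h := key gL1 hgL1 0 2 2 v w
    rw [mv_gL1_0, mv_gL1_2] at h
    simp [-map_zero, -map_eq_zero, zero_tmul, neg_tmul, LinearMap.map_zero, LinearMap.zero_apply,
      LinearMap.map_neg, Fin.sum_univ_three, gL1] at h
    first
    | linear_combination (norm := module) h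
    | linear_combination (norm := module) -h
  have e8 : ∀ v w : Fin 4 → ℝ, pi3 2 (B (E3 0 ⊗ₜ[ℝ] v) (E3 2 ⊗ₜ[ℝ] w)) = 0 := by
    intro v w
    have h := key gL1 hgL1 1 2 2 v w
    rw [mv_gL1_1, mv_gL1_2] at h
    simp [-map_zero, -map_eq_zero, zero_tmul, neg_tmul, LinearMap.map_zero, LinearMap.zero_apply,
      LinearMap.map_neg, Fin.sum_univ_three, gL1] at h
    first
    | linear_combination (norm := module) h
    | linear_combination (norm := module) -h
  have e9 : ∀ v w : Fin 4 → ℝ, pi3 1 (B (E3 2 ⊗ₜ[ℝ] v) (E3 1 ⊗ₜ[ℝ] w)) = 0 := by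
    intro v w
    have h := key gL2 hgL2 0 1 1 v w
    rw [mv_gL2_0, mv_gL2_1] at h
    simp [-map_zero, -map_eq_zero, zero_tmul, neg_tmul, LinearMap.map_zero, LinearMap.zero_apply,
      LinearMap.map_neg, Fin.sum_univ_three, gL2] at h
    first
    | linear_combination (norm := module) h
    | linear_combination (norm := module) -h
  have e10 : ∀ v w : Fin 4 → ℝ, pi3 0 (B (E3 1 ⊗ₜ[ℝ] v) (E3 0 ⊗ₜ[ℝ] w)) = 0 := by
    intro v w
    have h := key gL2 hgL2 1 2 0 v w
    rw [mv_gL2_1, mv_gL2_2] at h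
    simp [-map_zero, -map_eq_zero, zero_tmul, neg_tmul, LinearMap.map_zero, LinearMap.zero_apply,
      LinearMap.map_neg, Fin.sum_univ_three, gL2] at h
    first
    | linear_combination (norm := module) h + e7 v w
    | linear_combination (norm := module) -h + e7 v w
  have e11 : ∀ v w : Fin 4 → ℝ, pi3 1 (B (E3 1 ⊗ₜ[ℝ] v) (E3 0 ⊗ₜ[ℝ] w)) = 0 := by
    intro v w
    have h := key gL2 hgL2 1 2 1 v w
    rw [mv_gL2_1, mv_gL2_2] at h
    simp [-map_zero, -map_eq_zero, zero_tmul, neg_tmul, LinearMap.map_zero, LinearMap.zero_apply,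
      LinearMap.map_neg, Fin.sum_univ_three, gL2] at h
    first
    | linear_combination (norm := module) h
    | linear_combination (norm := module) -h
  have e12 : ∀ v w : Fin 4 → ℝ, pi3 2 (B (E3 1 ⊗ₜ[ℝ] v) (E3 0 ⊗ₜ[ℝ] w)) = pi3 0 (B (E3 1 ⊗ₜ[ℝ] v) (E3 2 ⊗ₜ[ℝ] w)) := by
    intro v w
    have h := key gL2 hgL2 1 2 2 v w
    rw [mv_gL2_1, mv_gL2_2] at h
    simp [-map_zero, -map_eq_zero, zero_tmul, neg_tmul, LinearMap.map_zero, LinearMap.zero_apply,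
      LinearMap.map_neg, Fin.sum_univ_three, gL2] at h
    first
    | linear_combination (norm := module) h
    | linear_combination (norm := module) -h
  have e13 : ∀ v w : Fin 4 → ℝ, pi3 2 (B (E3 1 ⊗ₜ[ℝ] v) (E3 0 ⊗ₜ[ℝ] w)) + pi3 2 (B (E3 0 ⊗ₜ[ℝ] v) (E3 1 ⊗ₜ[ℝ] w)) = 0 := by
    intro v w
    have h := key gL1 hgL1 0 0 2 v w
    rw [mv_gL1_0] at h
    simp [-map_zero, -map_eq_zero, zero_tmul, neg_tmul, LinearMap.map_zero, LinearMap.zero_apply,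
      LinearMap.map_neg, Fin.sum_univ_three, gL1] at h
    first
    | linear_combination (norm := module) h
    | linear_combination (norm := module) -h
  have e14 : ∀ v w : Fin 4 → ℝ, pi3 1 (B (E3 0 ⊗ₜ[ℝ] v) (E3 2 ⊗ₜ[ℝ] w)) = - pi3 2 (B (E3 0 ⊗ₜ[ℝ] v) (E3 1 ⊗ₜ[ℝ] w)) := by
    intro v w
    have h := key gR hgR 0 1 1 v w
    rw [mv_gR_0, mv_gR_1] at h
    simp [-map_zero, -map_eq_zero, zero_tmul, neg_tmul, LinearMap.map_zero, LinearMap.zero_apply,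
      LinearMap.map_neg, Fin.sum_univ_three, gR] at h
    first
    | linear_combination (norm := module) h
    | linear_combination (norm := module) -h
  have e15 : ∀ v w : Fin 4 → ℝ, pi3 0 (B (E3 0 ⊗ₜ[ℝ] v) (E3 2 ⊗ₜ[ℝ] w)) = 0 := by
    intro v w
    have h := key gR hgR 0 1 0 v w
    rw [mv_gR_0, mv_gR_1] at h
    simp [-map_zero, -map_eq_zero, zero_tmul, neg_tmul, LinearMap.map_zero, LinearMap.zero_apply,
      LinearMap.map_neg, Fin.sum_univ_three, gR] at h
    first
    | linear_combination (norm := module) h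
    | linear_combination (norm := module) -h
  have e16 : ∀ v w : Fin 4 → ℝ, pi3 0 (B (E3 0 ⊗ₜ[ℝ] v) (E3 0 ⊗ₜ[ℝ] w)) = pi3 1 (B (E3 0 ⊗ₜ[ℝ] v) (E3 1 ⊗ₜ[ℝ] w)) := by
    intro v w
    have h := key gL1 hgL1 0 1 0 v w
    rw [mv_gL1_0, mv_gL1_1] at h
    simp [-map_zero, -map_eq_zero, zero_tmul, neg_tmul, LinearMap.map_zero, LinearMap.zero_apply,
      LinearMap.map_neg, Fin.sum_univ_three, gL1] at h
    first
    | linear_combination (norm := module) h - e4 v w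
    | linear_combination (norm := module) -h - e4 v w
  have e17 : ∀ v w : Fin 4 → ℝ, pi3 1 (B (E3 1 ⊗ₜ[ℝ] v) (E3 1 ⊗ₜ[ℝ] w)) = pi3 0 (B (E3 0 ⊗ₜ[ℝ] v) (E3 1 ⊗ₜ[ℝ] w)) := by
    intro v w
    have h := key gL1 hgL1 0 1 1 v w
    rw [mv_gL1_0, mv_gL1_1] at h
    simp [-map_zero, -map_eq_zero, zero_tmul, neg_tmul, LinearMap.map_zero, LinearMap.zero_apply,
      LinearMap.map_neg, Fin.sum_univ_three, gL1] at h
    first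
    | linear_combination (norm := module) h - e2 v w
    | linear_combination (norm := module) -h - e2 v w
  have e18 : ∀ v w : Fin 4 → ℝ, pi3 2 (B (E3 2 ⊗ₜ[ℝ] v) (E3 2 ⊗ₜ[ℝ] w)) = 0 := by
    intro v w
    have h := key gL2 hgL2 0 2 2 v w
    rw [mv_gL2_0, mv_gL2_2] at h
    simp [-map_zero, -map_eq_zero, zero_tmul, neg_tmul, LinearMap.map_zero, LinearMap.zero_apply,
      LinearMap.map_neg, Fin.sum_univ_three, gL2] at h
    first
    | linear_combination (norm := module) h - e1 v w + e15 v w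
    | linear_combination (norm := module) -h - e1 v w + e15 v w
  -- symmetry of the seed bilinear form
  have hsymm : ∀ v w : Fin 4 → ℝ, pi3 2 (B (E3 0 ⊗ₜ[ℝ] v) (E3 1 ⊗ₜ[ℝ] w)) = pi3 2 (B (E3 0 ⊗ₜ[ℝ] w) (E3 1 ⊗ₜ[ℝ] v)) := by
    intro v w
    linear_combination (norm := module) e13 v w - hanti 1 0 2 v w
  have h011 : ∀ v w : Fin 4 → ℝ, pi3 1 (B (E3 0 ⊗ₜ[ℝ] v) (E3 1 ⊗ₜ[ℝ] w)) = 0 := by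
    intro v w
    first
    | linear_combination (norm := module) hanti 0 1 1 v w - e11 w v
    | linear_combination (norm := module) -hanti 0 1 1 v w - e11 w v
  have h010 : ∀ v w : Fin 4 → ℝ, pi3 0 (B (E3 0 ⊗ₜ[ℝ] v) (E3 1 ⊗ₜ[ℝ] w)) = 0 := by
    intro v w
    first
    | linear_combination (norm := module) hanti 0 1 0 v w - e10 w v
    | linear_combination (norm := module) -hanti 0 1 0 v w - e10 w v
  have h000 : ∀ v w : Fin 4 → ℝ, pi3 0 (B (E3 0 ⊗ₜ[ℝ] v) (E3 0 ⊗ₜ[ℝ] w)) = 0 := by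
    intro v w
    linear_combination (norm := module) e16 v w + h011 v w
  have h111 : ∀ v w : Fin 4 → ℝ, pi3 1 (B (E3 1 ⊗ₜ[ℝ] v) (E3 1 ⊗ₜ[ℝ] w)) = 0 := by
    intro v w
    linear_combination (norm := module) e17 v w + h010 v w
  have h102 : ∀ v w : Fin 4 → ℝ, pi3 2 (B (E3 1 ⊗ₜ[ℝ] v) (E3 0 ⊗ₜ[ℝ] w)) = - pi3 2 (B (E3 0 ⊗ₜ[ℝ] v) (E3 1 ⊗ₜ[ℝ] w)) := by
    intro v w
    linear_combination (norm := module) e13 v w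
  have h120 : ∀ v w : Fin 4 → ℝ, pi3 0 (B (E3 1 ⊗ₜ[ℝ] v) (E3 2 ⊗ₜ[ℝ] w)) = - pi3 2 (B (E3 0 ⊗ₜ[ℝ] v) (E3 1 ⊗ₜ[ℝ] w)) := by
    intro v w
    first
    | linear_combination (norm := module) h102 v w - e12 v w
    | linear_combination (norm := module) -h102 v w - e12 v w
  have h121 : ∀ v w : Fin 4 → ℝ, pi3 1 (B (E3 1 ⊗ₜ[ℝ] v) (E3 2 ⊗ₜ[ℝ] w)) = 0 := by
    intro v w
    first
    | linear_combination (norm := module) hanti 1 2 1 v w - e9 w v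
    | linear_combination (norm := module) -hanti 1 2 1 v w - e9 w v
  have h200 : ∀ v w : Fin 4 → ℝ, pi3 0 (B (E3 2 ⊗ₜ[ℝ] v) (E3 0 ⊗ₜ[ℝ] w)) = 0 := by
    intro v w
    linear_combination (norm := module) hanti 2 0 0 v w - e15 w v
  have h202 : ∀ v w : Fin 4 → ℝ, pi3 2 (B (E3 2 ⊗ₜ[ℝ] v) (E3 0 ⊗ₜ[ℝ] w)) = 0 := by
    intro v w
    linear_combination (norm := module) hanti 2 0 2 v w - e8 w v
  have h201 : ∀ v w : Fin 4 → ℝ, pi3 1 (B (E3 2 ⊗ₜ[ℝ] v) (E3 0 ⊗ₜ[ℝ] w)) = pi3 2 (B (E3 0 ⊗ₜ[ℝ] v) (E3 1 ⊗ₜ[ℝ] w)) := by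
    intro v w
    linear_combination (norm := module) hanti 2 0 1 v w - e14 w v - hsymm v w
  have h210 : ∀ v w : Fin 4 → ℝ, pi3 0 (B (E3 2 ⊗ₜ[ℝ] v) (E3 1 ⊗ₜ[ℝ] w)) = pi3 2 (B (E3 0 ⊗ₜ[ℝ] v) (E3 1 ⊗ₜ[ℝ] w)) := by
    intro v w
    linear_combination (norm := module) hanti 2 1 0 v w - h120 w v - hsymm v w
  have h212 : ∀ v w : Fin 4 → ℝ, pi3 2 (B (E3 2 ⊗ₜ[ℝ] v) (E3 1 ⊗ₜ[ℝ] w)) = 0 := by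
    intro v w
    linear_combination (norm := module) hanti 2 1 2 v w - e7 w v
  set bb : (Fin 4 → ℝ) →ₗ[ℝ] (Fin 4 → ℝ) →ₗ[ℝ] (Fin 5 → ℝ) :=
    ((B.compl₁₂ (TensorProduct.mk ℝ (Fin 3 → ℝ) (Fin 4 → ℝ) (E3 0))
      (TensorProduct.mk ℝ (Fin 3 → ℝ) (Fin 4 → ℝ) (E3 1))).compr₂ (pi3 2)) with hbbdef
  have hbb : ∀ v w : Fin 4 → ℝ, bb v w = pi3 2 (B (E3 0 ⊗ₜ[ℝ] v) (E3 1 ⊗ₜ[ℝ] w)) := fun v w => rfl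
  have hB00 : ∀ v w : Fin 4 → ℝ, B (E3 0 ⊗ₜ[ℝ] v) (E3 0 ⊗ₜ[ℝ] w) =
      ∑ k, K (E3 0) (E3 0) k • (E3 k ⊗ₜ[ℝ] bb v w) := by
    intro v w
    simp only [hbb]
    conv_lhs => rw [recon ((B (E3 0 ⊗ₜ[ℝ] v)) (E3 0 ⊗ₜ[ℝ] w))]
    simp only [Fin.sum_univ_three]
    rw [h000 v w, e2 v w, e1 v w]
    norm_num [K, Pi.single_apply, tmul_zero, tmul_neg, Matrix.cons_val_two, Matrix.tail_cons, Matrix.head_cons]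
    try norm_num [Fin.ext_iff]
    try module
  have hB01 : ∀ v w : Fin 4 → ℝ, B (E3 0 ⊗ₜ[ℝ] v) (E3 1 ⊗ₜ[ℝ] w) =
      ∑ k, K (E3 0) (E3 1) k • (E3 k ⊗ₜ[ℝ] bb v w) := by
    intro v w
    simp only [hbb]
    conv_lhs => rw [recon ((B (E3 0 ⊗ₜ[ℝ] v)) (E3 1 ⊗ₜ[ℝ] w))]
    simp only [Fin.sum_univ_three]
    rw [h010 v w, h011 v w]
    norm_num [K, Pi.single_apply, tmul_zero, tmul_neg, Matrix.cons_val_two, Matrix.tail_cons, Matrix.head_cons]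
    try norm_num [Fin.ext_iff]
    try module
  have hB02 : ∀ v w : Fin 4 → ℝ, B (E3 0 ⊗ₜ[ℝ] v) (E3 2 ⊗ₜ[ℝ] w) =
      ∑ k, K (E3 0) (E3 2) k • (E3 k ⊗ₜ[ℝ] bb v w) := by
    intro v w
    simp only [hbb]
    conv_lhs => rw [recon ((B (E3 0 ⊗ₜ[ℝ] v)) (E3 2 ⊗ₜ[ℝ] w))]
    simp only [Fin.sum_univ_three]
    rw [e15 v w, e14 v w, e8 v w]
    norm_num [K, Pi.single_apply, tmul_zero, tmul_neg, Matrix.cons_val_two, Matrix.tail_cons, Matrix.head_cons]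
    try norm_num [Fin.ext_iff]
    try module
  have hB10 : ∀ v w : Fin 4 → ℝ, B (E3 1 ⊗ₜ[ℝ] v) (E3 0 ⊗ₜ[ℝ] w) =
      ∑ k, K (E3 1) (E3 0) k • (E3 k ⊗ₜ[ℝ] bb v w) := by
    intro v w
    simp only [hbb]
    conv_lhs => rw [recon ((B (E3 1 ⊗ₜ[ℝ] v)) (E3 0 ⊗ₜ[ℝ] w))]
    simp only [Fin.sum_univ_three]
    rw [e10 v w, e11 v w, h102 v w]
    norm_num [K, Pi.single_apply, tmul_zero, tmul_neg, Matrix.cons_val_two, Matrix.tail_cons, Matrix.head_cons]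
    try norm_num [Fin.ext_iff]
    try module
  have hB11 : ∀ v w : Fin 4 → ℝ, B (E3 1 ⊗ₜ[ℝ] v) (E3 1 ⊗ₜ[ℝ] w) =
      ∑ k, K (E3 1) (E3 1) k • (E3 k ⊗ₜ[ℝ] bb v w) := by
    intro v w
    simp only [hbb]
    conv_lhs => rw [recon ((B (E3 1 ⊗ₜ[ℝ] v)) (E3 1 ⊗ₜ[ℝ] w))]
    simp only [Fin.sum_univ_three]
    rw [e4 v w, h111 v w, e3 v w]
    norm_num [K, Pi.single_apply, tmul_zero, tmul_neg, Matrix.cons_val_two, Matrix.tail_cons, Matrix.head_cons]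
    try norm_num [Fin.ext_iff]
    try module
  have hB12 : ∀ v w : Fin 4 → ℝ, B (E3 1 ⊗ₜ[ℝ] v) (E3 2 ⊗ₜ[ℝ] w) =
      ∑ k, K (E3 1) (E3 2) k • (E3 k ⊗ₜ[ℝ] bb v w) := by
    intro v w
    simp only [hbb]
    conv_lhs => rw [recon ((B (E3 1 ⊗ₜ[ℝ] v)) (E3 2 ⊗ₜ[ℝ] w))]
    simp only [Fin.sum_univ_three]
    rw [h120 v w, h121 v w, e7 v w]
    norm_num [K, Pi.single_apply, tmul_zero, tmul_neg, Matrix.cons_val_two, Matrix.tail_cons, Matrix.head_cons]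
    try norm_num [Fin.ext_iff]
    try module
  have hB20 : ∀ v w : Fin 4 → ℝ, B (E3 2 ⊗ₜ[ℝ] v) (E3 0 ⊗ₜ[ℝ] w) =
      ∑ k, K (E3 2) (E3 0) k • (E3 k ⊗ₜ[ℝ] bb v w) := by
    intro v w
    simp only [hbb]
    conv_lhs => rw [recon ((B (E3 2 ⊗ₜ[ℝ] v)) (E3 0 ⊗ₜ[ℝ] w))]
    simp only [Fin.sum_univ_three]
    rw [h200 v w, h201 v w, h202 v w]
    norm_num [K, Pi.single_apply, tmul_zero, tmul_neg, Matrix.cons_val_two, Matrix.tail_cons, Matrix.head_cons]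
    try norm_num [Fin.ext_iff]
    try module
  have hB21 : ∀ v w : Fin 4 → ℝ, B (E3 2 ⊗ₜ[ℝ] v) (E3 1 ⊗ₜ[ℝ] w) =
      ∑ k, K (E3 2) (E3 1) k • (E3 k ⊗ₜ[ℝ] bb v w) := by
    intro v w
    simp only [hbb]
    conv_lhs => rw [recon ((B (E3 2 ⊗ₜ[ℝ] v)) (E3 1 ⊗ₜ[ℝ] w))]
    simp only [Fin.sum_univ_three]
    rw [h210 v w, e9 v w, h212 v w]
    norm_num [K, Pi.single_apply, tmul_zero, tmul_neg, Matrix.cons_val_two, Matrix.tail_cons, Matrix.head_cons]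
    try norm_num [Fin.ext_iff]
    try module
  have hB22 : ∀ v w : Fin 4 → ℝ, B (E3 2 ⊗ₜ[ℝ] v) (E3 2 ⊗ₜ[ℝ] w) =
      ∑ k, K (E3 2) (E3 2) k • (E3 k ⊗ₜ[ℝ] bb v w) := by
    intro v w
    simp only [hbb]
    conv_lhs => rw [recon ((B (E3 2 ⊗ₜ[ℝ] v)) (E3 2 ⊗ₜ[ℝ] w))]
    simp only [Fin.sum_univ_three]
    rw [e6 v w, e5 v w, e18 v w]
    norm_num [K, Pi.single_apply, tmul_zero, tmul_neg, Matrix.cons_val_two, Matrix.tail_cons, Matrix.head_cons]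
    try norm_num [Fin.ext_iff]
    try module
  have hBval : ∀ (i j : Fin 3) (v w : Fin 4 → ℝ),
      B (E3 i ⊗ₜ[ℝ] v) (E3 j ⊗ₜ[ℝ] w) =
        ∑ k, K (E3 i) (E3 j) k • (E3 k ⊗ₜ[ℝ] bb v w) := by
    intro i j v w
    fin_cases i <;> fin_cases j
    exacts [hB00 v w, hB01 v w, hB02 v w, hB10 v w, hB11 v w, hB12 v w,
      hB20 v w, hB21 v w, hB22 v w]
  refine ⟨bb, ⟨fun v w => ?_, fun x y v w => ?_⟩, fun β' hβ' => ?_⟩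
  · rw [hbb, hbb]
    exact hsymm v w
  · rw [expand_tmul x v, expand_tmul y w, expand_tmul (K x y) (bb v w)]
    simp only [map_sum, LinearMap.sum_apply, LinearMap.map_smul, LinearMap.smul_apply]
    simp only [hBval]
    simp only [Fin.sum_univ_three]
    norm_num [K, Pi.single_apply, Matrix.cons_val_two, Matrix.tail_cons, Matrix.head_cons]
    try norm_num [Fin.ext_iff]
    module
  · obtain ⟨hs', hv'⟩ := hβ'
    refine LinearMap.ext fun v => LinearMap.ext fun w => ?_
    have h := congrArg (pi3 2) (hv' (E3 0) (E3 1) v w)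
    rw [pi3_tmul] at h
    norm_num [K, Pi.single_apply, Fin.ext_iff, Matrix.cons_val_two, Matrix.tail_cons, Matrix.head_cons] at h
    rw [hbb v w]
    exact h.symm
end
end
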